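/- Let μ be a probability measure on a measurable space Ω and let p, b, f be measurable sets with μ(f) = 1/2, μ(p) = 1/2, and μ(p ∩ b) > 0. If p and b are conditionally independent given f, i.e. μ(p ∩ b ∩ f) · μ(f) = μ(p ∩ f) · μ(b ∩ f), then μ[f | p ∩ b] = μ[p | f] · μ[b | f] / μ[b | p]. -/

import Mathlib

open MeasureTheory

noncomputable def condProb {Ω : Type*} [MeasurableSpace Ω] (μ : Measure Ω) (s t : Set Ω) : ℝ :=
  (μ (s ∩ t)).toReal / (μ t).toReal

theorem pearl_indifference_formula {Ω : Type*} [MeasurableSpace Ω] (μ : Measure Ω)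
    [IsProbabilityMeasure μ] (p b f : Set Ω)
    (hp : MeasurableSet p) (hb : MeasurableSet b) (hf : MeasurableSet f)
    (hμf : μ f = 1/2) (hμp : μ p = 1/2) (hμpb : 0 < μ (p ∩ b))
    (hCI : μ (p ∩ b ∩ f) * μ f = μ (p ∩ f) * μ (b ∩ f)) :
    condProb μ f (p ∩ b) = condProb μ p f * condProb μ b f / condProb μ b p := by
  have hCI' : (μ (p ∩ b ∩ f)).toReal * (μ f).toReal
      = (μ (p ∩ f)).toReal * (μ (b ∩ f)).toReal := by
    rw [← ENNReal.toReal_mul, ← ENNReal.toReal_mul, hCI]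
  rw [hμf] at hCI'
  have hpb : (μ (p ∩ b)).toReal ≠ 0 := by
    simp [ENNReal.toReal_eq_zero_iff, hμpb.ne', measure_ne_top]
  unfold condProb
  rw [Set.inter_comm f (p ∩ b), Set.inter_comm b p, hμf, hμp]
  norm_num at hCI' ⊢
  field_simp
  linear_combination 2 * hCI'
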